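/- Let K₀ denote the modified Bessel function given by K₀(y) = ∫₀^∞ exp(−y·cosh t) dt for y > 0. For ρ > 0 and θ ∈ ℝ, set q(t) = exp(iθ − ρ·(t + 1/t)) for t > 0 (so |q(t)| ≤ e^{−2ρ} < 1). Then the integral ∫₀^∞ ( q(t)/(1 − q(t)) )·t^{−1} dt converges absolutely, the series Σ_{n=1}^∞ e^{i·n·θ}·K₀(2nρ) converges absolutely, and ∫₀^∞ ( q(t)/(1 − q(t)) )·t^{−1} dt = 2·Σ_{n=1}^∞ e^{i·n·θ}·K₀(2nρ). -/

import Mathlib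

open MeasureTheory Real Set


private lemma cosh_lb' {x : ℝ} (hx : 0 ≤ x) : (1 + x) / 2 ≤ Real.cosh x := by
  have h1 : 1 + x ≤ Real.exp x := by linarith [Real.add_one_le_exp x]
  have h2 : Real.exp x / 2 ≤ Real.cosh x := by
    rw [Real.cosh_eq]
    have := (Real.exp_pos (-x)).le
    linarith
  linarith

private lemma two_le_add_inv' {t : ℝ} (ht : 0 < t) : 2 ≤ t + 1 / t := by
  rw [← sub_nonneg]
  have h : t + 1 / t - 2 = (t - 1) ^ 2 / t := by field_simp; ring
  rw [h]; positivity

private lemma intK' {y : ℝ} (hy : 0 < y) :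
    MeasureTheory.Integrable (fun x : ℝ => Real.exp (-y * Real.cosh x)) := by
  have hmeas : AEStronglyMeasurable (fun x : ℝ => Real.exp (-y * Real.cosh x)) volume :=
    (Real.continuous_exp.comp (continuous_const.mul Real.continuous_cosh)).aestronglyMeasurable
  have hIoi : IntegrableOn (fun x : ℝ => Real.exp (-y * Real.cosh x)) (Ioi 0) := by
    refine Integrable.mono' ((exp_neg_integrableOn_Ioi 0 (half_pos hy)).const_mul
      (Real.exp (-(y / 2)))) hmeas.restrict ?_
    filter_upwards [ae_restrict_mem measurableSet_Ioi] with x hx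
    rw [Real.norm_eq_abs, abs_of_pos (Real.exp_pos _), ← Real.exp_add]
    apply Real.exp_le_exp.2
    have h := cosh_lb' hx.le
    nlinarith [(mem_Ioi.mp hx).le]
  have hIic : IntegrableOn (fun x : ℝ => Real.exp (-y * Real.cosh x)) (Iic 0) := by
    have A : MeasurableEmbedding fun x : ℝ => -x := (Homeomorph.neg ℝ).measurableEmbedding
    rw [← Measure.map_neg_eq_self (volume : Measure ℝ), A.integrableOn_map_iff]
    simp only [Function.comp_def, Real.cosh_neg, neg_preimage, neg_Iic, neg_zero]
    exact (integrableOn_Ici_iff_integrableOn_Ioi).mpr hIoi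
  rw [← integrableOn_univ, ← Set.Iic_union_Ioi (a := (0 : ℝ))]
  exact hIic.union hIoi

private lemma Kfull' (y : ℝ) :
    (∫ x : ℝ, Real.exp (-y * Real.cosh x))
      = 2 * ∫ x in Ioi (0 : ℝ), Real.exp (-y * Real.cosh x) := by
  rw [← integral_comp_abs (f := fun x => Real.exp (-y * Real.cosh x))]
  simp_rw [Real.cosh_abs]

private lemma subst_int' (g : ℝ → ℝ) :
    IntegrableOn g (Ioi (0 : ℝ)) ↔ Integrable (fun x => Real.exp x * g (Real.exp x)) := by
  have h1 : ∀ x ∈ (univ : Set ℝ), HasDerivWithinAt Real.exp (Real.exp x) univ x :=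
    fun x _ => (Real.hasDerivAt_exp x).hasDerivWithinAt
  have h := integrableOn_image_iff_integrableOn_abs_deriv_smul MeasurableSet.univ h1
    Real.exp_injective.injOn g
  simpa only [image_univ, Real.range_exp, smul_eq_mul, Real.abs_exp,
    integrableOn_univ] using h

private lemma subst_eq' (g : ℝ → ℝ) :
    (∫ x in Ioi (0 : ℝ), g x) = ∫ x : ℝ, Real.exp x * g (Real.exp x) := by
  have h1 : ∀ x ∈ (univ : Set ℝ), HasDerivWithinAt Real.exp (Real.exp x) univ x :=
    fun x _ => (Real.hasDerivAt_exp x).hasDerivWithinAt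
  have h := integral_image_eq_integral_abs_deriv_smul MeasurableSet.univ h1
    Real.exp_injective.injOn g
  simpa only [image_univ, Real.range_exp, smul_eq_mul, Real.abs_exp,
    Measure.restrict_univ] using h

private lemma g_comp' (a x : ℝ) :
    Real.exp x * (Real.exp (-(a * (Real.exp x + 1 / Real.exp x))) / Real.exp x)
      = Real.exp (-(2 * a) * Real.cosh x) := by
  rw [mul_comm, div_mul_cancel₀ _ (Real.exp_ne_zero x)]
  congr 1
  rw [one_div, ← Real.exp_neg, Real.cosh_eq]
  ring

private lemma ga_int' {a : ℝ} (ha : 0 < a) :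
    IntegrableOn (fun t : ℝ => Real.exp (-(a * (t + 1 / t))) / t) (Ioi 0) := by
  rw [subst_int']
  have heq : (fun x => Real.exp x *
      ((fun t : ℝ => Real.exp (-(a * (t + 1 / t))) / t) (Real.exp x)))
      = fun x => Real.exp (-(2 * a) * Real.cosh x) := funext fun x => g_comp' a x
  rw [heq]
  exact intK' (by positivity)

private lemma ga_val' {a : ℝ} (ha : 0 < a) :
    (∫ t in Ioi (0 : ℝ), Real.exp (-(a * (t + 1 / t))) / t)
      = 2 * ∫ t in Ioi (0 : ℝ), Real.exp (-(2 * a) * Real.cosh t) := by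
  rw [subst_eq' (fun t : ℝ => Real.exp (-(a * (t + 1 / t))) / t)]
  have heq : (fun x => Real.exp x *
      ((fun t : ℝ => Real.exp (-(a * (t + 1 / t))) / t) (Real.exp x)))
      = fun x => Real.exp (-(2 * a) * Real.cosh x) := funext fun x => g_comp' a x
  rw [heq, Kfull']

private lemma K_bound' {ρ y : ℝ} (hρ : 0 < ρ) (hy : 2 * ρ ≤ y) :
    (∫ t in Ioi (0 : ℝ), Real.exp (-y * Real.cosh t))
      ≤ Real.exp (-(y / 2)) * ∫ t in Ioi (0 : ℝ), Real.exp (-ρ * t) := by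
  have hy0 : 0 < y := lt_of_lt_of_le (by linarith) hy
  rw [← MeasureTheory.integral_const_mul]
  refine setIntegral_mono_on (intK' hy0).integrableOn
    ((exp_neg_integrableOn_Ioi 0 hρ).const_mul _) measurableSet_Ioi ?_
  intro t ht
  rw [← Real.exp_add]
  apply Real.exp_le_exp.2
  have h := cosh_lb' (le_of_lt ht)
  have ht0 : (0:ℝ) ≤ t := le_of_lt ht
  nlinarith [mul_nonneg ht0 (by linarith : (0:ℝ) ≤ y - 2 * ρ)]



/-- with `q(t) = exp(iθ − ρ(t + 1/t))`, `ρ > 0`, the integral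
`∫₀^∞ (q/(1−q))·t⁻¹ dt` converges absolutely, the series `Σ_{n≥1} e^{inθ}K₀(2nρ)`
converges absolutely, and the integral equals twice the sum, where
`K₀(y) = ∫₀^∞ exp(−y·cosh t) dt`. -/
theorem stmt14 (K₀ : ℝ → ℝ)
    (hK₀ : ∀ y : ℝ, 0 < y → K₀ y = ∫ t in Set.Ioi (0 : ℝ), Real.exp (-y * Real.cosh t))
    (ρ θ : ℝ) (hρ : 0 < ρ)
    (q : ℝ → ℂ)
    (hq : ∀ t : ℝ, q t = Complex.exp (Complex.I * (θ : ℂ) - ((ρ * (t + 1 / t) : ℝ) : ℂ))) :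
    MeasureTheory.IntegrableOn (fun t : ℝ => q t / (1 - q t) / (t : ℂ)) (Set.Ioi 0)
    ∧ Summable (fun n : ℕ =>
        ‖Complex.exp (Complex.I * ((n : ℂ) + 1) * (θ : ℂ)) * (K₀ (2 * (n + 1) * ρ) : ℂ)‖)
    ∧ (∫ t in Set.Ioi (0 : ℝ), q t / (1 - q t) / (t : ℂ))
        = 2 * ∑' n : ℕ, Complex.exp (Complex.I * ((n : ℂ) + 1) * (θ : ℂ)) * (K₀ (2 * (n + 1) * ρ) : ℂ) := by
    -- basic facts
  have hqm : Measurable q := by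
    have hqf : q = fun t : ℝ => Complex.exp (Complex.I * θ - ((ρ * (t + 1 / t) : ℝ) : ℂ)) :=
      funext hq
    rw [hqf]; fun_prop
  have hnormq : ∀ t : ℝ, ‖q t‖ = Real.exp (-(ρ * (t + 1 / t))) := by
    intro t
    rw [hq, Complex.norm_exp]
    congr 1
    simp [Complex.sub_re, Complex.mul_re]
  have he1 : Real.exp (-(2 * ρ)) < 1 := by
    rw [← Real.exp_zero]; exact Real.exp_lt_exp.2 (by linarith)
  have hpos : 0 < 1 - Real.exp (-(2 * ρ)) := by linarith
  have hq_half : ∀ t ∈ Ioi (0 : ℝ), ‖q t‖ ≤ Real.exp (-(2 * ρ)) := by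
    intro t ht
    rw [hnormq]
    apply Real.exp_le_exp.2
    have h2 := two_le_add_inv' ht
    nlinarith
  have hden : ∀ t ∈ Ioi (0 : ℝ), 1 - Real.exp (-(2 * ρ)) ≤ ‖1 - q t‖ := by
    intro t ht
    have h1 := norm_sub_norm_le (1 : ℂ) (q t)
    have h2 := hq_half t ht
    simp only [norm_one] at h1
    linarith
  -- clause 1 : integrability
  have hmeas1 : AEStronglyMeasurable (fun t : ℝ => q t / (1 - q t) / (t : ℂ))
      (volume.restrict (Ioi 0)) :=
    (((hqm.div (measurable_const.sub hqm)).div Complex.measurable_ofReal)).aestronglyMeasurable.restrict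
  have h1 : IntegrableOn (fun t : ℝ => q t / (1 - q t) / (t : ℂ)) (Ioi 0) := by
    refine Integrable.mono' ((ga_int' hρ).const_mul ((1 - Real.exp (-(2 * ρ)))⁻¹)) hmeas1 ?_
    filter_upwards [ae_restrict_mem measurableSet_Ioi] with t ht
    rw [norm_div, norm_div, Complex.norm_real, Real.norm_eq_abs, abs_of_pos ht, hnormq t]
    calc Real.exp (-(ρ * (t + 1 / t))) / ‖1 - q t‖ / t
        ≤ Real.exp (-(ρ * (t + 1 / t))) / (1 - Real.exp (-(2 * ρ))) / t := by
          gcongr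
          all_goals first
            | exact hden t ht
            | exact hpos
            | exact (Real.exp_pos _).le
            | exact ht.le
            | positivity
      _ = (1 - Real.exp (-(2 * ρ)))⁻¹ * (Real.exp (-(ρ * (t + 1 / t))) / t) := by ring
  -- the functions gI n
  have hunit : ∀ n : ℕ, ‖Complex.exp (Complex.I * ((n : ℂ) + 1) * θ)‖ = 1 := by
    intro n
    rw [Complex.norm_exp]
    convert Real.exp_zero using 2
    simp [Complex.mul_re, Complex.mul_im]
  have hgI_int : ∀ n : ℕ,
      IntegrableOn (fun t : ℝ => Real.exp (-((((n : ℝ) + 1) * ρ) * (t + 1 / t))) / t) (Ioi 0) :=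
    fun n => ga_int' (by positivity)
  have hFeq : ∀ n : ℕ, ∀ t ∈ Ioi (0 : ℝ),
      q t ^ (n + 1) / (t : ℂ)
        = Complex.exp (Complex.I * ((n : ℂ) + 1) * θ)
            * ((Real.exp (-((((n : ℝ) + 1) * ρ) * (t + 1 / t))) / t : ℝ) : ℂ) := by
    intro n t _
    rw [hq, ← Complex.exp_nat_mul]
    have hcast : ((n + 1 : ℕ) : ℂ) * (Complex.I * θ - ((ρ * (t + 1 / t) : ℝ) : ℂ))
        = Complex.I * ((n : ℂ) + 1) * θ + ((-((((n : ℝ) + 1) * ρ) * (t + 1 / t)) : ℝ) : ℂ) := by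
      push_cast; ring
    rw [hcast, Complex.exp_add, ← Complex.ofReal_exp, mul_div_assoc, ← Complex.ofReal_div]
  have hFnorm : ∀ n : ℕ, ∀ t ∈ Ioi (0 : ℝ),
      ‖q t ^ (n + 1) / (t : ℂ)‖ = Real.exp (-((((n : ℝ) + 1) * ρ) * (t + 1 / t))) / t := by
    intro n t ht
    rw [hFeq n t ht, norm_mul, hunit n, one_mul, Complex.norm_real, Real.norm_eq_abs,
      abs_of_nonneg (div_nonneg (Real.exp_pos _).le (le_of_lt ht))]
  -- integrability of each term
  have hFint : ∀ n : ℕ, IntegrableOn (fun t : ℝ => q t ^ (n + 1) / (t : ℂ)) (Ioi 0) := by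
    intro n
    refine Integrable.mono' (hgI_int n)
      (((hqm.pow_const _).div Complex.measurable_ofReal).aestronglyMeasurable.restrict) ?_
    filter_upwards [ae_restrict_mem measurableSet_Ioi] with t ht
    rw [hFnorm n t ht]
  -- value of each integral
  have hKval : ∀ n : ℕ, K₀ (2 * ((n : ℝ) + 1) * ρ)
      = ∫ t in Ioi (0 : ℝ), Real.exp (-(2 * (((n : ℝ) + 1) * ρ)) * Real.cosh t) := by
    intro n
    rw [hK₀ (2 * ((n : ℝ) + 1) * ρ) (by positivity), mul_assoc]
  have hgIval : ∀ n : ℕ,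
      (∫ t in Ioi (0 : ℝ), Real.exp (-((((n : ℝ) + 1) * ρ) * (t + 1 / t))) / t)
        = 2 * K₀ (2 * ((n : ℝ) + 1) * ρ) := by
    intro n
    rw [ga_val' (a := ((n : ℝ) + 1) * ρ) (by positivity), hKval n]
  have hFval : ∀ n : ℕ, (∫ t in Ioi (0 : ℝ), q t ^ (n + 1) / (t : ℂ))
      = Complex.exp (Complex.I * ((n : ℂ) + 1) * θ)
          * ((2 * K₀ (2 * ((n : ℝ) + 1) * ρ) : ℝ) : ℂ) := by
    intro n
    rw [setIntegral_congr_fun measurableSet_Ioi (hFeq n), MeasureTheory.integral_const_mul]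
    congr 1
    have hco : (∫ a in Ioi (0 : ℝ), ((Real.exp (-((((n : ℝ) + 1) * ρ) * (a + 1 / a))) / a : ℝ) : ℂ))
        = ((∫ a in Ioi (0 : ℝ), Real.exp (-((((n : ℝ) + 1) * ρ) * (a + 1 / a))) / a : ℝ) : ℂ) :=
      integral_ofReal (𝕜 := ℂ)
    rw [hco, hgIval n]
  -- summability of the integrals of norms
  set Cρ : ℝ := ∫ t in Ioi (0 : ℝ), Real.exp (-ρ * t) with hCρ
  have hCρ0 : 0 ≤ Cρ := integral_nonneg fun t => (Real.exp_pos _).le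
  have hKle : ∀ n : ℕ, K₀ (2 * ((n : ℝ) + 1) * ρ) ≤ Real.exp (-ρ) ^ (n + 1) * Cρ := by
    intro n
    rw [hKval n]
    have hb := K_bound' (ρ := ρ) (y := 2 * (((n : ℝ) + 1) * ρ)) hρ
      (by nlinarith [Nat.cast_nonneg (α := ℝ) n])
    have hexp : Real.exp (-(2 * (((n : ℝ) + 1) * ρ) / 2)) = Real.exp (-ρ) ^ (n + 1) := by
      rw [← Real.exp_nat_mul]
      congr 1
      push_cast; ring
    rw [hexp] at hb
    exact hb
  have hKnonneg : ∀ n : ℕ, 0 ≤ K₀ (2 * ((n : ℝ) + 1) * ρ) := by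
    intro n
    rw [hKval n]
    exact integral_nonneg fun t => (Real.exp_pos _).le
  have hgeom : Summable (fun n : ℕ => Real.exp (-ρ) ^ (n + 1) * Cρ) := by
    apply Summable.mul_right
    have hr : Real.exp (-ρ) < 1 := by
      rw [← Real.exp_zero]; exact Real.exp_lt_exp.2 (by linarith)
    have := (summable_geometric_of_lt_one (Real.exp_pos (-ρ)).le hr).mul_right (Real.exp (-ρ))
    simpa only [← pow_succ] using this
  -- clause 2 : summability
  have h2 : Summable (fun n : ℕ =>
      ‖Complex.exp (Complex.I * ((n : ℂ) + 1) * (θ : ℂ)) * (K₀ (2 * (n + 1) * ρ) : ℂ)‖) := by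
    have hterm : ∀ n : ℕ,
        ‖Complex.exp (Complex.I * ((n : ℂ) + 1) * (θ : ℂ)) * (K₀ (2 * ((n : ℝ) + 1) * ρ) : ℂ)‖
          = K₀ (2 * ((n : ℝ) + 1) * ρ) := by
      intro n
      rw [norm_mul, hunit n, one_mul, Complex.norm_real, Real.norm_eq_abs,
        abs_of_nonneg (hKnonneg n)]
    refine Summable.of_nonneg_of_le (fun n => norm_nonneg _) (fun n => ?_) hgeom
    rw [hterm n]
    exact hKle n
  refine ⟨h1, h2, ?_⟩
  -- the exchange of sum and integral
  have hsumnorm : Summable (fun n : ℕ =>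
      ∫ t in Ioi (0 : ℝ), ‖q t ^ (n + 1) / (t : ℂ)‖) := by
    refine Summable.of_nonneg_of_le
      (fun n => integral_nonneg fun t => norm_nonneg _) (fun n => ?_)
      (hgeom.mul_left 2)
    have : (∫ t in Ioi (0 : ℝ), ‖q t ^ (n + 1) / (t : ℂ)‖)
        = 2 * K₀ (2 * ((n : ℝ) + 1) * ρ) := by
      rw [setIntegral_congr_fun measurableSet_Ioi (hFnorm n)]
      exact hgIval n
    rw [this]
    have := hKle n
    linarith
  have hswap := MeasureTheory.integral_tsum_of_summable_integral_norm
    (μ := volume.restrict (Ioi 0)) (F := fun (n : ℕ) (t : ℝ) => q t ^ (n + 1) / (t : ℂ))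
    hFint hsumnorm
  -- pointwise expansion
  have htsum : ∀ t ∈ Ioi (0 : ℝ),
      q t / (1 - q t) / (t : ℂ) = ∑' n : ℕ, q t ^ (n + 1) / (t : ℂ) := by
    intro t ht
    have hlt : ‖q t‖ < 1 := lt_of_le_of_lt (hq_half t ht) he1
    have hgeo : ∑' n : ℕ, q t ^ (n + 1) = q t / (1 - q t) := by
      simp_rw [pow_succ']
      rw [tsum_mul_left, tsum_geometric_of_norm_lt_one hlt, div_eq_mul_inv]
    rw [← hgeo]
    exact (tsum_div_const).symm
  rw [setIntegral_congr_fun measurableSet_Ioi htsum, ← hswap]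
  rw [tsum_congr hFval, ← tsum_mul_left]
  apply tsum_congr
  intro n
  push_cast
  ring
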